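/- arXiv:1510.00064 — 4 statements merged into one kernel-verified Lean document; each statement's English description precedes it below -/
import Mathlib

section
/- (Lemma 2, equivalence of optimal costs.) Let X and V be real random variables on a probability space, let a ∈ {−1, +1} and b₁, b₂ ∈ ℝ, and set X′ = aX + b₁ and V′ = V + b₂. Let P_T > 0. Then the infimum of E[(X − h(g(X) + V))²] over all measurable pairs (g, h) with E[(g(X))²] ≤ P_T equals the infimum of E[(X′ − h(g(X′) + V′))²] over all measurable pairs (g, h) with E[(g(X′))²] ≤ P_T. -/
open MeasureTheory ProbabilityTheory

/-- **Lemma 2, equivalence of optimal costs.** For `X' = aX + b₁`,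
`V' = V + b₂` with `a ∈ {-1, +1}`, the optimal (infimum) mean squared error over all
measurable encoder/decoder pairs satisfying the power constraint `P_T` is the same for
the pair `(X, V)` as for the pair `(X', V')`. -/
theorem optimal_cost_invariant_under_affine_transform
    {Ω : Type*} [MeasureSpace Ω] [IsProbabilityMeasure (ℙ : Measure Ω)]
    (X V : Ω → ℝ) (hX : Measurable X) (hV : Measurable V)
    (a : ℝ) (ha : a = -1 ∨ a = 1) (b₁ b₂ : ℝ)
    (X' V' : Ω → ℝ) (hX' : X' = fun w => a * X w + b₁) (hV' : V' = fun w => V w + b₂)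
    (PT : ℝ) (hPT : 0 < PT) :
    sInf {r : ℝ | ∃ g h : ℝ → ℝ, Measurable g ∧ Measurable h ∧
        (∫ w, (g (X w)) ^ 2 ∂ℙ) ≤ PT ∧
        r = ∫ w, (X w - h (g (X w) + V w)) ^ 2 ∂ℙ}
      = sInf {r : ℝ | ∃ g h : ℝ → ℝ, Measurable g ∧ Measurable h ∧
          (∫ w, (g (X' w)) ^ 2 ∂ℙ) ≤ PT ∧
          r = ∫ w, (X' w - h (g (X' w) + V' w)) ^ 2 ∂ℙ} := by
  subst hX' hV'
  have ha2 : a * a = 1 := by rcases ha with h | h <;> subst h <;> norm_num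
  apply congrArg sInf
  ext r
  simp only [Set.mem_setOf_eq]
  constructor
  · rintro ⟨g, h, hg, hh, hpow, hr⟩
    refine ⟨fun x => g (a * x - a * b₁), fun y => a * h (y - b₂) + b₁,
      hg.comp (by fun_prop), (hh.comp (by fun_prop)).const_mul a |>.add_const b₁, ?_, ?_⟩
    · have e1 : ∀ w, a * (a * X w + b₁) - a * b₁ = X w := by
        intro w
        have : a * (a * X w + b₁) - a * b₁ = a * a * X w := by ring
        rw [this, ha2, one_mul]
      simpa only [e1] using hpow
    · rw [hr]
      apply integral_congr_ae
      filter_upwards with w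
      have e1 : a * (a * X w + b₁) - a * b₁ = X w := by
        have : a * (a * X w + b₁) - a * b₁ = a * a * X w := by ring
        rw [this, ha2, one_mul]
      rw [e1]
      have e2 : g (X w) + (V w + b₂) - b₂ = g (X w) + V w := by ring
      rw [e2]
      have : a * X w + b₁ - (a * h (g (X w) + V w) + b₁)
          = a * (X w - h (g (X w) + V w)) := by ring
      rw [this, mul_pow, show a ^ 2 = a * a by ring, ha2, one_mul]
  · rintro ⟨g, h, hg, hh, hpow, hr⟩
    refine ⟨fun x => g (a * x + b₁), fun y => a * (h (y + b₂) - b₁),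
      hg.comp (by fun_prop), ((hh.comp (by fun_prop)).sub_const b₁).const_mul a, ?_, ?_⟩
    · exact hpow
    · rw [hr]
      apply integral_congr_ae
      filter_upwards with w
      have : a * X w + b₁ - h (g (a * X w + b₁) + (V w + b₂))
          = a * (X w - a * (h (g (a * X w + b₁) + V w + b₂) - b₁)) := by
        have : a * (X w - a * (h (g (a * X w + b₁) + V w + b₂) - b₁))
            = a * X w - a * a * (h (g (a * X w + b₁) + V w + b₂) - b₁) := by ring
        rw [this, ha2]
        ring_nf
      rw [show g (a * X w + b₁) + V w + b₂ = g (a * X w + b₁) + (V w + b₂) by ring] at this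
      rw [this, mul_pow, show a ^ 2 = a * a by ring, ha2, one_mul]
      rw [add_assoc]
end

section
/- (Lemma 3, mean squared error computation.) Let λ > 0, k > 0, P_T > 0, and set θ = √P_T, α = λθ, γ = 1/k. Let X be exponential with rate λ and let V have Gamma distribution with shape k and scale θ, with X and V independent. Define Y = αX − α/λ, Ỹ = Y + V, and X̂ = (1/α)·(γ/(γ+1))·Ỹ + (γ/(γ+1))·(1/λ). Then E[(X − X̂)²] = 1/((γ+1)λ²) = k/((k+1)λ²). -/
open MeasureTheory ProbabilityTheory Real

open scoped ENNReal NNReal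

namespace GammaAux

lemma ae_ne_zero : ∀ᵐ (x : ℝ), x ≠ 0 := by
  exact compl_mem_ae_iff.mpr (measure_singleton (0:ℝ))

lemma pow_mul_pdf (n : ℕ) {a r : ℝ} (ha : 0 < a) (hr : 0 < r) {x : ℝ} (hx : x ≠ 0) :
    x ^ n * gammaPDFReal a r x
      = (Real.Gamma (a + n) / (Real.Gamma a * r ^ n)) * gammaPDFReal (a + n) r x := by
  have hΓa : Real.Gamma a ≠ 0 := (Real.Gamma_pos_of_pos ha).ne'
  have hΓan : Real.Gamma (a + n) ≠ 0 :=
    (Real.Gamma_pos_of_pos (by positivity)).ne'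
  rcases lt_or_gt_of_ne hx with hneg | hpos
  · simp [gammaPDFReal, if_neg (not_le.mpr hneg)]
  · have hxe : x ^ (n:ℝ) * x ^ (a - 1) = x ^ (a + n - 1) := by
      rw [← Real.rpow_add hpos]; ring_nf
    have hre : r ^ (a + (n:ℝ)) = r ^ a * r ^ n := by
      rw [Real.rpow_add hr, Real.rpow_natCast]
    simp only [gammaPDFReal, if_pos hpos.le]
    rw [← Real.rpow_natCast x n, hre, ← hxe]
    field_simp

lemma integral_pdf {a r : ℝ} (ha : 0 < a) (hr : 0 < r) :
    ∫ x, gammaPDFReal a r x = 1 := by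
  have h := lintegral_gammaPDF_eq_one ha hr
  rw [integral_eq_lintegral_of_nonneg_ae
      (ae_of_all _ (gammaPDFReal_nonneg ha hr))
      (measurable_gammaPDFReal a r).aestronglyMeasurable]
  simp only [gammaPDF] at h ⊢
  rw [h]; simp

lemma integrable_pdf {a r : ℝ} (ha : 0 < a) (hr : 0 < r) :
    Integrable (gammaPDFReal a r) := by
  refine ⟨(measurable_gammaPDFReal a r).aestronglyMeasurable, ?_⟩
  rw [hasFiniteIntegral_iff_ofReal (ae_of_all _ (gammaPDFReal_nonneg ha hr))]
  have h := lintegral_gammaPDF_eq_one ha hr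
  simp only [gammaPDF] at h
  rw [h]; exact ENNReal.one_lt_top

lemma integral_pow_gammaMeasure (n : ℕ) {a r : ℝ} (ha : 0 < a) (hr : 0 < r) :
    ∫ x, x ^ n ∂(gammaMeasure a r) = Real.Gamma (a + n) / (Real.Gamma a * r ^ n) := by
  have hpdf : gammaPDF a r = fun x => ((gammaPDFReal a r x).toNNReal : ℝ≥0∞) := rfl
  rw [gammaMeasure, hpdf,
    integral_withDensity_eq_integral_smul (measurable_gammaPDFReal a r).real_toNNReal]
  have : ∀ᵐ x : ℝ, (gammaPDFReal a r x).toNNReal • (x ^ n)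
      = (Real.Gamma (a + n) / (Real.Gamma a * r ^ n)) * gammaPDFReal (a + n) r x := by
    filter_upwards [ae_ne_zero] with x hx
    rw [NNReal.smul_def, smul_eq_mul, Real.coe_toNNReal _ (gammaPDFReal_nonneg ha hr x),
      mul_comm, pow_mul_pdf n ha hr hx]
  rw [integral_congr_ae this, integral_const_mul, integral_pdf (by positivity) hr, mul_one]

lemma integrable_pow_gammaMeasure (n : ℕ) {a r : ℝ} (ha : 0 < a) (hr : 0 < r) :
    Integrable (fun x => x ^ n) (gammaMeasure a r) := by
  have hm : Measurable (gammaPDF a r) := (measurable_gammaPDFReal a r).ennreal_ofReal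
  rw [gammaMeasure, integrable_withDensity_iff hm
      (ae_of_all _ fun x => (by exact ENNReal.ofReal_lt_top : (gammaPDF a r) x < ∞))]
  have h : Integrable (fun x => (Real.Gamma (a + n) / (Real.Gamma a * r ^ n))
      * gammaPDFReal (a + n) r x) := (integrable_pdf (by positivity) hr).const_mul _
  refine h.congr ?_
  filter_upwards [ae_ne_zero] with x hx
  rw [← pow_mul_pdf n ha hr hx, gammaPDF, ENNReal.toReal_ofReal (gammaPDFReal_nonneg ha hr x)]

end GammaAux

lemma gamma1 : Real.Gamma (1 + (1:ℕ)) = 1 := by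
  norm_num [Real.Gamma_two]

lemma gamma2 : Real.Gamma (1 + (2:ℕ)) = 2 := by
  rw [show ((1:ℝ) + (2:ℕ)) = ((2:ℕ) : ℝ) + 1 by push_cast; ring,
    Real.Gamma_nat_eq_factorial]
  norm_num


/-- **Lemma 3, mean squared error computation.** With `θ = √P_T`, `α = λθ`,
`γ = 1/k`, `X` exponential with rate `λ`, `V` Gamma with shape `k` and scale `θ` (rate `θ⁻¹`),
`X ⫫ V`, `Y = αX - α/λ`, `Ỹ = Y + V`, and
`X̂ = (1/α)(γ/(γ+1))Ỹ + (γ/(γ+1))(1/λ)`, one has `E[(X - X̂)²] = 1/((γ+1)λ²) = k/((k+1)λ²)`. -/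
theorem affine_scheme_mse
    {Ω : Type*} [MeasureSpace Ω] [IsProbabilityMeasure (ℙ : Measure Ω)]
    (lam k PT : ℝ) (hlam : 0 < lam) (hk : 0 < k) (hPT : 0 < PT)
    (θ α γ : ℝ) (hθ : θ = Real.sqrt PT) (hα : α = lam * θ) (hγ : γ = 1 / k)
    (X V : Ω → ℝ) (hX : Measurable X) (hV : Measurable V)
    (hXlaw : Measure.map X ℙ = expMeasure lam)
    (hVlaw : Measure.map V ℙ = gammaMeasure k θ⁻¹)
    (hindep : IndepFun X V ℙ)
    (Y Ytilde Xhat : Ω → ℝ)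
    (hY : Y = fun w => α * X w - α / lam)
    (hYtilde : Ytilde = fun w => Y w + V w)
    (hXhat : Xhat = fun w => (1 / α) * (γ / (γ + 1)) * Ytilde w + (γ / (γ + 1)) * (1 / lam)) :
    (∫ w, (X w - Xhat w) ^ 2 ∂ℙ) = 1 / ((γ + 1) * lam ^ 2) ∧
      1 / ((γ + 1) * lam ^ 2) = k / ((k + 1) * lam ^ 2) := by
  have hθ0 : 0 < θ := hθ ▸ Real.sqrt_pos.mpr hPT
  have hα0 : 0 < α := hα ▸ mul_pos hlam hθ0
  have hγ0 : 0 < γ := hγ ▸ by positivity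
  have hrθ : 0 < θ⁻¹ := inv_pos.mpr hθ0
  have hΓk : Real.Gamma k ≠ 0 := (Real.Gamma_pos_of_pos hk).ne'
  -- moments of X
  have hXint : ∀ n : ℕ, Integrable (fun w => X w ^ n) ℙ ∧
      ∫ w, X w ^ n ∂ℙ = Real.Gamma (1 + n) / (Real.Gamma 1 * lam ^ n) := by
    intro n
    have hg : AEStronglyMeasurable (fun x : ℝ => x ^ n) (Measure.map X ℙ) :=
      (measurable_id.pow_const n).aestronglyMeasurable
    have hint : Integrable (fun x : ℝ => x ^ n) (Measure.map X ℙ) := by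
      rw [hXlaw]
      exact GammaAux.integrable_pow_gammaMeasure n one_pos hlam
    refine ⟨(integrable_map_measure hg hX.aemeasurable).1 hint, ?_⟩
    rw [← integral_map hX.aemeasurable hg, hXlaw]
    exact GammaAux.integral_pow_gammaMeasure n one_pos hlam
  have hVint : ∀ n : ℕ, Integrable (fun w => V w ^ n) ℙ ∧
      ∫ w, V w ^ n ∂ℙ = Real.Gamma (k + n) / (Real.Gamma k * (θ⁻¹) ^ n) := by
    intro n
    have hg : AEStronglyMeasurable (fun x : ℝ => x ^ n) (Measure.map V ℙ) :=
      (measurable_id.pow_const n).aestronglyMeasurable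
    have hint : Integrable (fun x : ℝ => x ^ n) (Measure.map V ℙ) := by
      rw [hVlaw]
      exact GammaAux.integrable_pow_gammaMeasure n hk hrθ
    refine ⟨(integrable_map_measure hg hV.aemeasurable).1 hint, ?_⟩
    rw [← integral_map hV.aemeasurable hg, hVlaw]
    exact GammaAux.integral_pow_gammaMeasure n hk hrθ
  have hIX : Integrable X ℙ := by simpa using (hXint 1).1
  have hIV : Integrable V ℙ := by simpa using (hVint 1).1
  have hIX2 : Integrable (fun w => X w ^ 2) ℙ := (hXint 2).1
  have hIV2 : Integrable (fun w => V w ^ 2) ℙ := (hVint 2).1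
  have hEX : ∫ w, X w ∂ℙ = 1 / lam := by
    have h := (hXint 1).2
    simp only [pow_one] at h
    rw [h, gamma1, Real.Gamma_one]
    ring
  have hEX2 : ∫ w, X w ^ 2 ∂ℙ = 2 / lam ^ 2 := by
    rw [(hXint 2).2, gamma2, Real.Gamma_one]
    ring
  have hEV : ∫ w, V w ∂ℙ = k * θ := by
    have h := (hVint 1).2
    simp only [pow_one, Nat.cast_one] at h
    rw [h, Real.Gamma_add_one hk.ne']
    field_simp
  have hEV2 : ∫ w, V w ^ 2 ∂ℙ = k * (k + 1) * θ ^ 2 := by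
    have h := (hVint 2).2
    simp only [Nat.cast_ofNat] at h
    rw [h]
    have h2 : Real.Gamma (k + 2) = (k + 1) * (k * Real.Gamma k) := by
      have : k + 2 = (k + 1) + 1 := by ring
      rw [this, Real.Gamma_add_one (by positivity), Real.Gamma_add_one hk.ne']
    rw [h2]
    field_simp
  have hIXV : Integrable (fun w => X w * V w) ℙ := hindep.integrable_mul hIX hIV
  have hEXV : ∫ w, X w * V w ∂ℙ = (1 / lam) * (k * θ) := by
    have h : ∫ w, X w * V w ∂ℙ = (∫ w, X w ∂ℙ) * ∫ w, V w ∂ℙ :=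
      hindep.integral_mul_eq_mul_integral hIX.1 hIV.1
    rw [h, hEX, hEV]
  -- pointwise decomposition
  set c : ℝ := 1 / (γ + 1) with hc
  set d : ℝ := γ / ((γ + 1) * α) with hd
  have hγ1 : γ + 1 ≠ 0 := by positivity
  have hkey : ∀ w, (X w - Xhat w) ^ 2
      = c ^ 2 * X w ^ 2 - (2 * c * d) * (X w * V w) + d ^ 2 * V w ^ 2 := by
    intro w
    rw [hXhat, hYtilde, hY, hc, hd]
    field_simp
    ring
  rw [show (fun w => (X w - Xhat w) ^ 2)
      = fun w => c ^ 2 * X w ^ 2 - (2 * c * d) * (X w * V w) + d ^ 2 * V w ^ 2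
      from funext hkey]
  have hf1 : Integrable (fun w => c ^ 2 * X w ^ 2 - 2 * c * d * (X w * V w)) ℙ :=
    (hIX2.const_mul _).sub (hIXV.const_mul _)
  rw [integral_add hf1 (hIV2.const_mul _),
    integral_sub (hIX2.const_mul _) (hIXV.const_mul _),
    integral_const_mul, integral_const_mul, integral_const_mul,
    hEX2, hEXV, hEV2]
  constructor
  · rw [hc, hd, hγ, hα]
    have h1 : (1:ℝ)/k + 1 ≠ 0 := by positivity
    field_simp
    ring
  · rw [hγ]
    field_simp
    ring
end

section
/- (Expected one-stage cost under a threshold policy.) Let λ > 0, k > 0, P_T > 0, c > 0, β > 0, and set θ = √P_T, α = λθ, γ = 1/k, m = k/((k+1)λ²). Let X have Laplace density p_X(x) = (λ/2)e^{−λ|x|} and let V have Gamma distribution with shape k and scale θ, with X and V independent. Define the estimate X̂ = 0 if |X| ≤ β and X̂ = sgn(X)·((1/α)·(γ/(γ+1))·(α|X| − αβ − α/λ + V) + (γ/(γ+1))·(1/λ) + β) if |X| > β. Then E[c·1{|X| > β} + (X − X̂)²] = 2∫₀^β x²·(λ/2)e^{−λx} dx + (c + m)·e^{−λβ}. -/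
open MeasureTheory ProbabilityTheory Real
open Set Filter
open scoped NNReal ENNReal

set_option maxHeartbeats 1000000


lemma aux_base_integrable (n : ℕ) {lam : ℝ} (hlam : 0 < lam) :
    IntegrableOn (fun x : ℝ => x ^ n * Real.exp (-(lam * x))) (Set.Ioi 0) := by
  have h := integrableOn_rpow_mul_exp_neg_mul_rpow (s := (n : ℝ)) (p := 1)
    (by exact lt_of_lt_of_le (by norm_num) (Nat.cast_nonneg n)) zero_lt_one hlam
  simpa [Real.rpow_natCast, Real.rpow_one, neg_mul] using h

lemma aux_base_integral (n : ℕ) {lam : ℝ} (hlam : 0 < lam) :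
    ∫ x in Set.Ioi (0:ℝ), x ^ n * Real.exp (-(lam * x)) = (Nat.factorial n : ℝ) / lam ^ (n + 1) := by
  have h := integral_rpow_mul_exp_neg_mul_Ioi (a := (n : ℝ) + 1) (r := lam)
    (by positivity) hlam
  rw [show ((n : ℝ) + 1 - 1) = (n : ℝ) by ring] at h
  have h2 : ∫ x in Set.Ioi (0:ℝ), x ^ n * Real.exp (-(lam * x))
      = (1 / lam) ^ ((n : ℝ) + 1) * Real.Gamma ((n : ℝ) + 1) := by
    rw [← h]
    refine setIntegral_congr_fun measurableSet_Ioi fun x _ => ?_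
    rw [Real.rpow_natCast]
  rw [h2, show ((n : ℝ) + 1) = ((n + 1 : ℕ) : ℝ) by push_cast; ring, Real.rpow_natCast,
    ]
  rw [Nat.cast_add, Nat.cast_one, Real.Gamma_nat_eq_factorial, one_div, inv_pow]
  field_simp

lemma aux_shift_integrable (n : ℕ) {lam β : ℝ} (hlam : 0 < lam) :
    IntegrableOn (fun y : ℝ => (y - β) ^ n * Real.exp (-(lam * y))) (Set.Ioi β) := by
  have hg : MeasurableEmbedding (fun x : ℝ => x + β) :=
    (Homeomorph.addRight β).isClosedEmbedding.measurableEmbedding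
  have hmap : Measure.map (fun x : ℝ => x + β) volume = volume :=
    map_add_right_eq_self volume β
  have hpre : (fun x : ℝ => x + β) ⁻¹' Set.Ioi β = Set.Ioi 0 := by
    ext x; simp [lt_add_iff_pos_left]
  rw [show (volume : Measure ℝ) = Measure.map (fun x : ℝ => x + β) volume from hmap.symm, hg.integrableOn_map_iff]
  rw [show ((fun y : ℝ => (y - β) ^ n * Real.exp (-(lam * y))) ∘ (fun x : ℝ => x + β))
      = fun x : ℝ => (x ^ n * Real.exp (-(lam * x))) * Real.exp (-(lam * β)) by
    funext x
    simp only [Function.comp_apply, add_sub_cancel_right]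
    rw [show -(lam * (x + β)) = -(lam * x) + -(lam * β) by ring, Real.exp_add]
    ring]
  rw [hpre]
  exact (aux_base_integrable n hlam).mul_const _

lemma aux_shift_integral (n : ℕ) {lam β : ℝ} (hlam : 0 < lam) :
    ∫ y in Set.Ioi β, (y - β) ^ n * Real.exp (-(lam * y))
      = (Nat.factorial n : ℝ) / lam ^ (n + 1) * Real.exp (-(lam * β)) := by
  have hg : MeasurableEmbedding (fun x : ℝ => x + β) :=
    (Homeomorph.addRight β).isClosedEmbedding.measurableEmbedding
  have hmap : Measure.map (fun x : ℝ => x + β) volume = volume :=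
    map_add_right_eq_self volume β
  have hpre : (fun x : ℝ => x + β) ⁻¹' Set.Ioi β = Set.Ioi 0 := by
    ext x; simp [lt_add_iff_pos_left]
  calc ∫ y in Set.Ioi β, (y - β) ^ n * Real.exp (-(lam * y))
      = ∫ y in Set.Ioi β, (y - β) ^ n * Real.exp (-(lam * y))
          ∂(Measure.map (fun x : ℝ => x + β) volume) := by rw [hmap]
    _ = ∫ x in (fun x : ℝ => x + β) ⁻¹' Set.Ioi β,
          ((x + β) - β) ^ n * Real.exp (-(lam * (x + β))) := by
        rw [hg.setIntegral_map]
    _ = ∫ x in Set.Ioi (0:ℝ), (x ^ n * Real.exp (-(lam * x))) * Real.exp (-(lam * β)) := by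
        rw [hpre]
        refine setIntegral_congr_fun measurableSet_Ioi fun x _ => ?_
        rw [add_sub_cancel_right, show -(lam * (x + β)) = -(lam * x) + -(lam * β) by ring,
          Real.exp_add]
        ring
    _ = (Nat.factorial n : ℝ) / lam ^ (n + 1) * Real.exp (-(lam * β)) := by
        rw [integral_mul_const, aux_base_integral n hlam]

lemma aux_gamma_ae (n : ℕ) {a r : ℝ} (ha : 0 < a) (hr : 0 < r) :
    (fun x : ℝ => x ^ n * gammaPDFReal a r x) =ᵐ[volume]
      fun x : ℝ => (r ^ a / Real.Gamma a) *
        Set.indicator (Set.Ioi 0) (fun x : ℝ => x ^ (a + n - 1) * Real.exp (-(r * x))) x := by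
  filter_upwards [compl_mem_ae_iff.mpr (measure_singleton (0:ℝ))] with x hx
  have hx0 : x ≠ 0 := hx
  rcases hx0.lt_or_gt with hneg | hpos
  · rw [Set.indicator_of_notMem (by simp [hneg.not_gt] : x ∉ Set.Ioi (0:ℝ))]
    simp [gammaPDFReal, not_le.mpr hneg]
  · rw [Set.indicator_of_mem (by exact hpos : x ∈ Set.Ioi (0:ℝ))]
    simp only [gammaPDFReal, if_pos hpos.le]
    rw [show a + (n : ℝ) - 1 = (a - 1) + (n : ℝ) by ring, Real.rpow_add hpos,
      Real.rpow_natCast]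
    ring

lemma aux_gamma_indicator_integrable (n : ℕ) {a r : ℝ} (ha : 0 < a) (hr : 0 < r) :
    Integrable (fun x : ℝ => (r ^ a / Real.Gamma a) *
      Set.indicator (Set.Ioi 0) (fun x : ℝ => x ^ (a + n - 1) * Real.exp (-(r * x))) x) := by
  refine Integrable.const_mul ?_ _
  refine IntegrableOn.integrable_indicator ?_ measurableSet_Ioi
  have h := integrableOn_rpow_mul_exp_neg_mul_rpow (s := a + n - 1) (p := 1)
    (by have := Nat.cast_nonneg (α := ℝ) n; linarith) zero_lt_one hr
  simpa [Real.rpow_one, neg_mul] using h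

lemma gamma_moment_integrable (n : ℕ) {a r : ℝ} (ha : 0 < a) (hr : 0 < r) :
    Integrable (fun x : ℝ => x ^ n * gammaPDFReal a r x) :=
  (aux_gamma_indicator_integrable n ha hr).congr (aux_gamma_ae n ha hr).symm

lemma gamma_moment (n : ℕ) {a r : ℝ} (ha : 0 < a) (hr : 0 < r) :
    ∫ x : ℝ, x ^ n * gammaPDFReal a r x = Real.Gamma (a + n) / (Real.Gamma a * r ^ n) := by
  rw [integral_congr_ae (aux_gamma_ae n ha hr), integral_const_mul,
    integral_indicator measurableSet_Ioi]
  have h := integral_rpow_mul_exp_neg_mul_Ioi (a := a + n) (r := r) (by positivity) hr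
  rw [h]
  have h1 : (1 / r) ^ (a + (n:ℝ)) = 1 / (r ^ a * r ^ n) := by
    rw [one_div, Real.inv_rpow hr.le, ← one_div, ← Real.rpow_natCast r n,
      ← Real.rpow_add hr]
  rw [h1]
  have hGa : Real.Gamma a ≠ 0 := (Real.Gamma_pos_of_pos ha).ne'
  have hra : r ^ a ≠ 0 := (Real.rpow_pos_of_pos hr a).ne'
  have hrn : (r : ℝ) ^ n ≠ 0 := pow_ne_zero n hr.ne'
  field_simp

lemma transfer_integral {ρ : ℝ → ℝ} (hm : Measurable ρ) (h0 : ∀ x, 0 ≤ ρ x) (g : ℝ → ℝ) :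
    ∫ x, g x ∂(volume.withDensity fun x => ENNReal.ofReal (ρ x)) = ∫ x, g x * ρ x := by
  have : (fun x => ENNReal.ofReal (ρ x)) = fun x => ((Real.toNNReal (ρ x) : ℝ≥0) : ℝ≥0∞) :=
    rfl
  rw [this, integral_withDensity_eq_integral_smul hm.real_toNNReal g]
  refine integral_congr_ae (Filter.Eventually.of_forall fun x => ?_)
  simp [NNReal.smul_def, Real.coe_toNNReal _ (h0 x), mul_comm]

lemma transfer_integrable {ρ : ℝ → ℝ} (hm : Measurable ρ) (h0 : ∀ x, 0 ≤ ρ x) (g : ℝ → ℝ) :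
    Integrable g (volume.withDensity fun x => ENNReal.ofReal (ρ x))
      ↔ Integrable (fun x => g x * ρ x) := by
  have : (fun x => ENNReal.ofReal (ρ x)) = fun x => ((Real.toNNReal (ρ x) : ℝ≥0) : ℝ≥0∞) :=
    rfl
  rw [this, integrable_withDensity_iff_integrable_smul hm.real_toNNReal]
  refine integrable_congr (Filter.Eventually.of_forall fun x => ?_)
  simp [NNReal.smul_def, Real.coe_toNNReal _ (h0 x), mul_comm]

lemma integrable_comp_abs' {f : ℝ → ℝ} (hf : IntegrableOn f (Set.Ioi 0))
    (hmeas : Measurable f) : Integrable (fun x : ℝ => f |x|) := by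
  have hIoi : IntegrableOn (fun x : ℝ => f |x|) (Set.Ioi 0) := by
    refine hf.congr_fun (fun x hx => ?_) measurableSet_Ioi
    rw [abs_eq_self.mpr (le_of_lt hx)]
  have hIic : IntegrableOn (fun x : ℝ => f |x|) (Set.Iic 0) := by
    rw [show (volume : Measure ℝ) = Measure.map (fun x : ℝ => -x) volume from
      (Measure.map_neg_eq_self (volume : Measure ℝ)).symm,
      (show MeasurableEmbedding (fun x : ℝ => -x) from
        (Homeomorph.neg ℝ).measurableEmbedding).integrableOn_map_iff]
    simp_rw [Function.comp_def, abs_neg, neg_preimage, neg_Iic, neg_zero]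
    exact Iff.mpr integrableOn_Ici_iff_integrableOn_Ioi hIoi
  have := hIic.union hIoi
  rwa [Set.Iic_union_Ioi, integrableOn_univ] at this

lemma laplace_side (lam β s u₀ u₁ u₂ : ℝ) (hlam : 0 < lam) (hβ : 0 < β) :
    Integrable (fun x : ℝ =>
      (if β < |x| then u₀ + u₁ * (|x| - β) + u₂ * (|x| - β) ^ 2 else s * x ^ 2)
        * (lam / 2 * Real.exp (-(lam * |x|)))) ∧
    (∫ x : ℝ, (if β < |x| then u₀ + u₁ * (|x| - β) + u₂ * (|x| - β) ^ 2 else s * x ^ 2)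
        * (lam / 2 * Real.exp (-(lam * |x|))))
      = 2 * s * (∫ y in Set.Ioc (0:ℝ) β, y ^ 2 * (lam / 2 * Real.exp (-(lam * y))))
        + (u₀ + u₁ / lam + 2 * u₂ / lam ^ 2) * Real.exp (-(lam * β)) := by
  set F : ℝ → ℝ := fun y =>
    (if β < y then u₀ + u₁ * (y - β) + u₂ * (y - β) ^ 2 else s * y ^ 2)
      * (lam / 2 * Real.exp (-(lam * y))) with hF
  have hfun : (fun x : ℝ =>
      (if β < |x| then u₀ + u₁ * (|x| - β) + u₂ * (|x| - β) ^ 2 else s * x ^ 2)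
        * (lam / 2 * Real.exp (-(lam * |x|)))) = fun x : ℝ => F |x| := by
    funext x
    simp only [hF, sq_abs]
  have hmeasF : Measurable F := by
    apply Measurable.mul
    · exact Measurable.ite (measurableSet_lt measurable_const measurable_id) (by fun_prop)
        (by fun_prop)
    · fun_prop
  have hIoc : IntegrableOn F (Set.Ioc 0 β) := by
    have hcont : Continuous fun y : ℝ => s * y ^ 2 * (lam / 2 * Real.exp (-(lam * y))) := by
      fun_prop
    refine (hcont.integrableOn_Ioc).congr_fun (fun y hy => ?_) measurableSet_Ioc
    simp only [hF]
    rw [if_neg (not_lt.mpr hy.2)]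
  have h0 := (aux_shift_integrable 0 (lam := lam) (β := β) hlam).const_mul (u₀ * (lam / 2))
  have h1 := (aux_shift_integrable 1 (lam := lam) (β := β) hlam).const_mul (u₁ * (lam / 2))
  have h2 := (aux_shift_integrable 2 (lam := lam) (β := β) hlam).const_mul (u₂ * (lam / 2))
  have hEq : Set.EqOn (fun y : ℝ =>
      u₀ * (lam / 2) * ((y - β) ^ 0 * Real.exp (-(lam * y)))
      + u₁ * (lam / 2) * ((y - β) ^ 1 * Real.exp (-(lam * y)))
      + u₂ * (lam / 2) * ((y - β) ^ 2 * Real.exp (-(lam * y)))) F (Set.Ioi β) := by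
    intro y hy
    simp only [hF]
    rw [if_pos (Set.mem_Ioi.mp hy)]
    ring
  have hIoiβ : IntegrableOn F (Set.Ioi β) := by
    refine IntegrableOn.congr_fun ?_ hEq measurableSet_Ioi
    exact (h0.add h1).add h2
  have hIoi0 : IntegrableOn F (Set.Ioi 0) := by
    rw [← Set.Ioc_union_Ioi_eq_Ioi (le_of_lt hβ)]
    exact integrableOn_union.mpr ⟨hIoc, hIoiβ⟩
  have hint : Integrable (fun x : ℝ => F |x|) := integrable_comp_abs' hIoi0 hmeasF
  constructor
  · rw [hfun]; exact hint
  · rw [hfun, integral_comp_abs (f := F)]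
    rw [← Set.Ioc_union_Ioi_eq_Ioi (le_of_lt hβ),
      setIntegral_union (Set.Ioc_disjoint_Ioi le_rfl) measurableSet_Ioi hIoc hIoiβ]
    have e1 : ∫ y in Set.Ioc (0:ℝ) β, F y
        = s * ∫ y in Set.Ioc (0:ℝ) β, y ^ 2 * (lam / 2 * Real.exp (-(lam * y))) := by
      rw [← integral_const_mul]
      refine setIntegral_congr_fun measurableSet_Ioc fun y hy => ?_
      simp only [hF]
      rw [if_neg (not_lt.mpr hy.2)]
      ring
    have e2 : ∫ y in Set.Ioi β, F y
        = u₀ * (lam / 2) * ((Nat.factorial 0 : ℝ) / lam ^ 1 * Real.exp (-(lam * β)))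
        + u₁ * (lam / 2) * ((Nat.factorial 1 : ℝ) / lam ^ 2 * Real.exp (-(lam * β)))
        + u₂ * (lam / 2) * ((Nat.factorial 2 : ℝ) / lam ^ 3 * Real.exp (-(lam * β))) := by
      have key2 := integral_add (μ := volume.restrict (Set.Ioi β)) (h0.add h1) h2
      simp only [Pi.add_apply] at key2
      rw [← setIntegral_congr_fun measurableSet_Ioi hEq, key2, integral_add h0 h1]
      simp only [integral_const_mul]
      rw [aux_shift_integral 0 hlam, aux_shift_integral 1 hlam, aux_shift_integral 2 hlam]
    rw [e1, e2]
    simp only [Nat.factorial]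
    push_cast
    have hl : lam ≠ 0 := hlam.ne'
    field_simp
    ring


lemma pointwise_decomp (lam k c β α : ℝ) (hlam : 0 < lam) (hk : 0 < k) (hβ : 0 < β)
    (hα : α ≠ 0) (x v : ℝ) :
    (if β < |x| then c else 0) + (x - (if |x| ≤ β then 0 else
      Real.sign x * ((1 / α) * ((1/k) / ((1/k) + 1)) * (α * |x| - α * β - α / lam + v)
        + ((1/k) / ((1/k) + 1)) * (1 / lam) + β))) ^ 2
    = (if β < |x| then c + 0 * (|x| - β) + (k / (k+1)) ^ 2 * (|x| - β) ^ 2 else 1 * x ^ 2) * v ^ 0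
      + (if β < |x| then 0 + (-2 * (k / (k+1)) / ((k+1) * α)) * (|x| - β) + 0 * (|x| - β) ^ 2
          else 0 * x ^ 2) * v ^ 1
      + (if β < |x| then (1 / ((k+1) * α)) ^ 2 + 0 * (|x| - β) + 0 * (|x| - β) ^ 2
          else 0 * x ^ 2) * v ^ 2 := by
  have hk1 : k + 1 ≠ 0 := by positivity
  have hk0 : k ≠ 0 := hk.ne'
  have hl0 : lam ≠ 0 := hlam.ne'
  by_cases h : |x| ≤ β
  · rw [if_pos h, if_neg (not_lt.mpr h), if_neg (not_lt.mpr h), if_neg (not_lt.mpr h),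
      if_neg (not_lt.mpr h)]
    ring
  · push_neg at h
    rw [if_neg (not_le.mpr h), if_pos h, if_pos h, if_pos h, if_pos h]
    have hx0 : x ≠ 0 := by
      intro h0
      rw [h0, abs_zero] at h
      linarith
    have hgam : (1/k) / ((1/k) + 1) = 1 / (k + 1) := by
      field_simp
      ring
    rw [hgam]
    rcases hx0.lt_or_gt with hx | hx
    · rw [Real.sign_of_neg hx, abs_of_neg hx]
      field_simp
      ring
    · rw [Real.sign_of_pos hx, abs_of_pos hx]
      field_simp
      ring

/-- **Expected one-stage cost under a threshold policy.** For a Laplace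
source `X`, Gamma noise `V` (shape `k`, scale `θ = √P_T`) independent of `X`, `α = λθ`,
`γ = 1/k`, `m = k/((k+1)λ²)`, and the threshold-`β` scheme with estimate `X̂ = 0` when
`|X| ≤ β` and `X̂ = sgn(X)((1/α)(γ/(γ+1))(α|X| - αβ - α/λ + V) + (γ/(γ+1))(1/λ) + β)`
when `|X| > β`, the expected one-stage cost is
`E[c·1{|X| > β} + (X - X̂)²] = 2∫₀^β x²(λ/2)e^{-λx} dx + (c + m)e^{-λβ}`. -/
theorem threshold_policy_expected_cost
    {Ω : Type*} [MeasureSpace Ω] [IsProbabilityMeasure (ℙ : Measure Ω)]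
    (lam k PT c β : ℝ) (hlam : 0 < lam) (hk : 0 < k) (hPT : 0 < PT) (hc : 0 < c) (hβ : 0 < β)
    (θ α γ m : ℝ) (hθ : θ = Real.sqrt PT) (hα : α = lam * θ) (hγ : γ = 1 / k)
    (hm : m = k / ((k + 1) * lam ^ 2))
    (X V : Ω → ℝ) (hX : Measurable X) (hV : Measurable V)
    (hXlaw : Measure.map X ℙ
      = volume.withDensity fun x => ENNReal.ofReal (lam / 2 * Real.exp (-lam * |x|)))
    (hVlaw : Measure.map V ℙ = gammaMeasure k θ⁻¹)
    (hindep : IndepFun X V ℙ)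
    (Xhat : Ω → ℝ)
    (hXhat : Xhat = fun w =>
      if |X w| ≤ β then 0
      else Real.sign (X w) * ((1 / α) * (γ / (γ + 1)) * (α * |X w| - α * β - α / lam + V w)
        + (γ / (γ + 1)) * (1 / lam) + β)) :
    (∫ w, ((if β < |X w| then c else 0) + (X w - Xhat w) ^ 2) ∂ℙ)
      = 2 * (∫ x in (0 : ℝ)..β, x ^ 2 * (lam / 2 * Real.exp (-lam * x)))
        + (c + m) * Real.exp (-lam * β) := by
  subst hγ hXhat hm hα
  have hθpos : 0 < θ := hθ ▸ Real.sqrt_pos.mpr hPT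
  have hθ0 : θ ≠ 0 := hθpos.ne'
  have hl0 : lam ≠ 0 := hlam.ne'
  have hk1 : (k:ℝ) + 1 ≠ 0 := by positivity
  have hα0 : lam * θ ≠ 0 := mul_ne_zero hl0 hθ0
  have hr : (0:ℝ) < θ⁻¹ := by positivity
  set r : ℝ := θ⁻¹ with hrdef
  set μ₁ : Measure ℝ := Measure.map X ℙ with hμ₁
  set μ₂ : Measure ℝ := Measure.map V ℙ with hμ₂
  haveI : IsProbabilityMeasure μ₁ := Measure.isProbabilityMeasure_map hX.aemeasurable
  haveI : IsProbabilityMeasure μ₂ := Measure.isProbabilityMeasure_map hV.aemeasurable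
  -- density functions
  set ρX : ℝ → ℝ := fun x => lam / 2 * Real.exp (-(lam * |x|)) with hρX
  have hρXm : Measurable ρX := by fun_prop
  have hρX0 : ∀ x, 0 ≤ ρX x := fun x => by positivity
  have hXlaw' : μ₁ = volume.withDensity fun x => ENNReal.ofReal (ρX x) := by
    rw [hXlaw]
    congr 1
    funext x
    rw [neg_mul]
  have hρVm : Measurable (gammaPDFReal k r) := measurable_gammaPDFReal k r
  have hρV0 : ∀ x, 0 ≤ gammaPDFReal k r x := gammaPDFReal_nonneg hk hr
  have hVlaw' : μ₂ = volume.withDensity fun x => ENNReal.ofReal (gammaPDFReal k r x) := hVlaw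
  -- the three x-functions
  set g0 : ℝ → ℝ := fun x =>
    if β < |x| then c + 0 * (|x| - β) + (k / (k+1)) ^ 2 * (|x| - β) ^ 2 else 1 * x ^ 2 with hg0
  set g1 : ℝ → ℝ := fun x =>
    if β < |x| then 0 + (-2 * (k / (k+1)) / ((k+1) * (lam * θ))) * (|x| - β) + 0 * (|x| - β) ^ 2
      else 0 * x ^ 2 with hg1
  set g2 : ℝ → ℝ := fun x =>
    if β < |x| then (1 / ((k+1) * (lam * θ))) ^ 2 + 0 * (|x| - β) + 0 * (|x| - β) ^ 2
      else 0 * x ^ 2 with hg2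
  have hgmeas : ∀ (u₀ u₁ u₂ s : ℝ), Measurable (fun x : ℝ =>
      if β < |x| then u₀ + u₁ * (|x| - β) + u₂ * (|x| - β) ^ 2 else s * x ^ 2) := by
    intro u₀ u₁ u₂ s
    exact Measurable.ite (measurableSet_lt measurable_const continuous_abs.measurable)
      (by fun_prop) (by fun_prop)
  have hmg0 : Measurable g0 := hgmeas c 0 ((k / (k+1)) ^ 2) 1
  have hmg1 : Measurable g1 := hgmeas 0 (-2 * (k / (k+1)) / ((k+1) * (lam * θ))) 0 0
  have hmg2 : Measurable g2 := hgmeas ((1 / ((k+1) * (lam * θ))) ^ 2) 0 0 0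
  have hΦmeas : Measurable (fun p : ℝ × ℝ => g0 p.1 * p.2 ^ 0 + g1 p.1 * p.2 ^ 1
      + g2 p.1 * p.2 ^ 2) := by fun_prop
  have hmap : Measure.map (fun w => (X w, V w)) ℙ = μ₁.prod μ₂ :=
    (indepFun_iff_map_prod_eq_prod_map_map hX.aemeasurable hV.aemeasurable).mp hindep
  have step1 : (∫ w, ((if β < |X w| then c else 0) + (X w -
        (if |X w| ≤ β then 0 else
          Real.sign (X w) * ((1 / (lam * θ)) * ((1/k) / ((1/k) + 1))
            * ((lam * θ) * |X w| - (lam * θ) * β - (lam * θ) / lam + V w)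
          + ((1/k) / ((1/k) + 1)) * (1 / lam) + β))) ^ 2) ∂ℙ)
      = ∫ p, (g0 p.1 * p.2 ^ 0 + g1 p.1 * p.2 ^ 1 + g2 p.1 * p.2 ^ 2) ∂(μ₁.prod μ₂) := by
    rw [← hmap, integral_map (hX.aemeasurable.prodMk hV.aemeasurable)
      hΦmeas.aestronglyMeasurable]
    refine integral_congr_ae (Filter.Eventually.of_forall fun w => ?_)
    exact pointwise_decomp lam k c β (lam * θ) hlam hk hβ hα0 (X w) (V w)
  -- integrability on the X side
  have hg0i : Integrable g0 μ₁ := by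
    rw [hXlaw', transfer_integrable hρXm hρX0]
    exact (laplace_side lam β 1 c 0 ((k / (k+1)) ^ 2) hlam hβ).1
  have hg1i : Integrable g1 μ₁ := by
    rw [hXlaw', transfer_integrable hρXm hρX0]
    exact (laplace_side lam β 0 0 (-2 * (k / (k+1)) / ((k+1) * (lam * θ))) 0 hlam hβ).1
  have hg2i : Integrable g2 μ₁ := by
    rw [hXlaw', transfer_integrable hρXm hρX0]
    exact (laplace_side lam β 0 ((1 / ((k+1) * (lam * θ))) ^ 2) 0 0 hlam hβ).1
  -- integrability on the V side
  have hvi : ∀ n : ℕ, Integrable (fun v : ℝ => v ^ n) μ₂ := by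
    intro n
    rw [hVlaw', transfer_integrable hρVm hρV0]
    exact gamma_moment_integrable n hk hr
  have I0 : Integrable (fun p : ℝ × ℝ => g0 p.1 * p.2 ^ 0) (μ₁.prod μ₂) :=
    hg0i.mul_prod (hvi 0)
  have I1 : Integrable (fun p : ℝ × ℝ => g1 p.1 * p.2 ^ 1) (μ₁.prod μ₂) :=
    hg1i.mul_prod (hvi 1)
  have I2 : Integrable (fun p : ℝ × ℝ => g2 p.1 * p.2 ^ 2) (μ₁.prod μ₂) :=
    hg2i.mul_prod (hvi 2)
  have key := integral_add (μ := μ₁.prod μ₂) (I0.add I1) I2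
  simp only [Pi.add_apply] at key
  have P0 := integral_prod_mul (μ := μ₁) (ν := μ₂) g0 (fun v : ℝ => v ^ 0)
  have P1 := integral_prod_mul (μ := μ₁) (ν := μ₂) g1 (fun v : ℝ => v ^ 1)
  have P2 := integral_prod_mul (μ := μ₁) (ν := μ₂) g2 (fun v : ℝ => v ^ 2)
  rw [step1, key, integral_add I0 I1, P0, P1, P2]
  -- X-side values
  set S : ℝ := ∫ y in Set.Ioc (0:ℝ) β, y ^ 2 * (lam / 2 * Real.exp (-(lam * y))) with hS
  have A0 : ∫ x, g0 x ∂μ₁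
      = 2 * 1 * S + (c + 0 / lam + 2 * ((k / (k+1)) ^ 2) / lam ^ 2) * Real.exp (-(lam * β)) := by
    rw [hXlaw', transfer_integral hρXm hρX0]
    exact (laplace_side lam β 1 c 0 ((k / (k+1)) ^ 2) hlam hβ).2
  have A1 : ∫ x, g1 x ∂μ₁
      = 2 * 0 * S + (0 + (-2 * (k / (k+1)) / ((k+1) * (lam * θ))) / lam + 2 * 0 / lam ^ 2)
          * Real.exp (-(lam * β)) := by
    rw [hXlaw', transfer_integral hρXm hρX0]
    exact (laplace_side lam β 0 0 (-2 * (k / (k+1)) / ((k+1) * (lam * θ))) 0 hlam hβ).2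
  have A2 : ∫ x, g2 x ∂μ₁
      = 2 * 0 * S + ((1 / ((k+1) * (lam * θ))) ^ 2 + 0 / lam + 2 * 0 / lam ^ 2)
          * Real.exp (-(lam * β)) := by
    rw [hXlaw', transfer_integral hρXm hρX0]
    exact (laplace_side lam β 0 ((1 / ((k+1) * (lam * θ))) ^ 2) 0 0 hlam hβ).2
  -- V-side values
  have hGk : Real.Gamma k ≠ 0 := (Real.Gamma_pos_of_pos hk).ne'
  have M0 : ∫ v, (v:ℝ) ^ 0 ∂μ₂ = 1 := by
    rw [hVlaw', transfer_integral hρVm hρV0, gamma_moment 0 hk hr]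
    simp [div_self, hGk]
  have M1 : ∫ v, (v:ℝ) ^ 1 ∂μ₂ = k * θ := by
    rw [hVlaw', transfer_integral hρVm hρV0, gamma_moment 1 hk hr]
    rw [Nat.cast_one, Real.Gamma_add_one hk.ne']
    rw [hrdef]
    field_simp
  have M2 : ∫ v, (v:ℝ) ^ 2 ∂μ₂ = k * (k + 1) * θ ^ 2 := by
    rw [hVlaw', transfer_integral hρVm hρV0, gamma_moment 2 hk hr]
    rw [Nat.cast_ofNat, show k + 2 = (k + 1) + 1 by ring, Real.Gamma_add_one hk1,
      Real.Gamma_add_one hk.ne']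
    rw [hrdef]
    field_simp
  rw [A0, A1, A2, M0, M1, M2]
  -- relate interval integral to Ioc integral
  have hSint : (∫ x in (0 : ℝ)..β, x ^ 2 * (lam / 2 * Real.exp (-lam * x))) = S := by
    rw [intervalIntegral.integral_of_le hβ.le, hS]
    simp only [neg_mul]
  rw [hSint]
  have hE : Real.exp (-lam * β) = Real.exp (-(lam * β)) := by rw [neg_mul]
  rw [hE]
  field_simp
  ring
end

section
/- (Theorem 4, unique optimal threshold.) Let λ > 0, c > 0, m ≥ 0, and define J : (0,∞) → ℝ by J(β) = 2∫₀^β x²·(λ/2)e^{−λx} dx + 2(c + m)∫_β^∞ (λ/2)e^{−λx} dx. Set β* = √(c + m). Then β* is the unique global minimizer of J on (0,∞): for every β ∈ (0,∞) with β ≠ β*, J(β) > J(β*). Moreover, J is strictly decreasing on (0, β*] and strictly increasing on [β*, ∞). -/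
open MeasureTheory Real

lemma tail_integral_exp (lam : ℝ) (hlam : 0 < lam) (b : ℝ) :
    (∫ x in Set.Ioi b, lam / 2 * Real.exp (-lam * x)) = Real.exp (-lam * b) / 2 := by
  rw [MeasureTheory.integral_const_mul]
  have h : (∫ x in Set.Ioi b, Real.exp (-lam * x))
      = lam⁻¹ * Real.exp (-(lam * b)) := by
    have := integral_comp_mul_left_Ioi (fun x => Real.exp (-x)) b hlam
    simp only [smul_eq_mul] at this
    rw [show (fun x => Real.exp (-lam * x)) = (fun x => Real.exp (-(lam * x))) by
      funext x; ring_nf]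
    rw [this, integral_exp_neg_Ioi]
  rw [h, neg_mul]
  field_simp

lemma J_hasDerivAt (lam c m : ℝ) (hlam : 0 < lam) (b : ℝ) :
    HasDerivAt (fun β => 2 * (∫ x in (0 : ℝ)..β, x ^ 2 * (lam / 2 * Real.exp (-lam * x)))
      + 2 * (c + m) * ∫ x in Set.Ioi β, lam / 2 * Real.exp (-lam * x))
      (lam * Real.exp (-lam * b) * (b ^ 2 - (c + m))) b := by
  have hcont : Continuous fun x : ℝ => x ^ 2 * (lam / 2 * Real.exp (-lam * x)) := by
    continuity
  have h1 : HasDerivAt (fun β => ∫ x in (0 : ℝ)..β, x ^ 2 * (lam / 2 * Real.exp (-lam * x)))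
      (b ^ 2 * (lam / 2 * Real.exp (-lam * b))) b := by
    exact intervalIntegral.integral_hasDerivAt_right
      (hcont.intervalIntegrable _ _) (hcont.stronglyMeasurableAtFilter _ _)
      hcont.continuousAt
  have h2 : HasDerivAt (fun β => ∫ x in Set.Ioi β, lam / 2 * Real.exp (-lam * x))
      (-lam * Real.exp (-lam * b) / 2) b := by
    have : HasDerivAt (fun β : ℝ => Real.exp (-lam * β) / 2)
        (-lam * Real.exp (-lam * b) / 2) b := by
      have := (((hasDerivAt_id b).const_mul (-lam)).exp).div_const 2
      simpa [mul_comm] using this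
    refine this.congr_of_eventuallyEq ?_
    filter_upwards with β using (tail_integral_exp lam hlam β)
  have := (h1.const_mul 2).add (h2.const_mul (2 * (c + m)))
  refine this.congr_deriv ?_
  ring

/-- **Theorem 4, unique optimal threshold.** With
`J(β) = 2∫₀^β x²(λ/2)e^{-λx} dx + 2(c+m)∫_β^∞ (λ/2)e^{-λx} dx` and `β* = √(c+m)`, the
threshold `β*` is the unique global minimizer of `J` on `(0, ∞)`; moreover `J` is strictly
decreasing on `(0, β*]` and strictly increasing on `[β*, ∞)`. -/
theorem threshold_cost_unique_minimizer
    (lam c m : ℝ) (hlam : 0 < lam) (hc : 0 < c) (hm : 0 ≤ m)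
    (J : ℝ → ℝ)
    (hJ : J = fun β => 2 * (∫ x in (0 : ℝ)..β, x ^ 2 * (lam / 2 * Real.exp (-lam * x)))
      + 2 * (c + m) * ∫ x in Set.Ioi β, lam / 2 * Real.exp (-lam * x))
    (βstar : ℝ) (hβstar : βstar = Real.sqrt (c + m)) :
    (∀ β : ℝ, 0 < β → β ≠ βstar → J βstar < J β) ∧
      StrictAntiOn J (Set.Ioc 0 βstar) ∧ StrictMonoOn J (Set.Ici βstar) := by
  have hcm : 0 < c + m := by linarith
  have hβpos : 0 < βstar := by rw [hβstar]; exact Real.sqrt_pos.mpr hcm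
  have hderiv : ∀ b : ℝ, HasDerivAt J (lam * Real.exp (-lam * b) * (b ^ 2 - (c + m))) b := by
    intro b; rw [hJ]; exact J_hasDerivAt lam c m hlam b
  have hJcont : Continuous J := by
    have hd : Differentiable ℝ J := fun b => (hderiv b).differentiableAt
    exact hd.continuous
  have hanti : StrictAntiOn J (Set.Ioc 0 βstar) := by
    apply strictAntiOn_of_deriv_neg (convex_Ioc 0 βstar) hJcont.continuousOn
    intro x hx
    rw [interior_Ioc] at hx
    rw [(hderiv x).deriv]
    have hx2 : x ^ 2 < c + m := by
      have h1 : x < Real.sqrt (c + m) := hβstar ▸ hx.2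
      nlinarith [Real.sq_sqrt hcm.le, hx.1, Real.sqrt_nonneg (c + m)]
    exact mul_neg_of_pos_of_neg (mul_pos hlam (Real.exp_pos _)) (by linarith)
  have hmono : StrictMonoOn J (Set.Ici βstar) := by
    apply strictMonoOn_of_deriv_pos (convex_Ici βstar) hJcont.continuousOn
    intro x hx
    rw [interior_Ici] at hx
    rw [(hderiv x).deriv]
    have hx2 : c + m < x ^ 2 := by
      have h1 : Real.sqrt (c + m) < x := hβstar ▸ hx
      nlinarith [Real.sq_sqrt hcm.le, Real.sqrt_nonneg (c + m)]
    exact mul_pos (mul_pos hlam (Real.exp_pos _)) (by linarith)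
  refine ⟨?_, hanti, hmono⟩
  intro β hβ hne
  rcases lt_or_gt_of_ne hne with h | h
  · exact hanti ⟨hβ, h.le⟩ ⟨hβpos, le_refl _⟩ h
  · exact hmono (le_refl βstar) h.le h
end
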